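/- arXiv:1409.1553 — 2 statements merged into one kernel-verified Lean document; each statement's English description precedes it below -/
import Mathlib

section
/- Let f : A → B, α : A → C, β : B → D, g : C → D be a commuting square of ℤ-indexed chain complexes of R-modules (β ∘ f = g ∘ α). Suppose B and C are acyclic (H_k(B) = 0 and H_k(C) = 0 for all k) and the iterated-fiber complex of the square is acyclic. Then H_k(A) ≅ H_{k+1}(D) for every integer k. -/
variable {R : Type} [CommRing R]

section Defs

variable {M N : ℤ → Type} [∀ k, AddCommGroup (M k)] [∀ k, Module R (M k)]
  [∀ k, AddCommGroup (N k)] [∀ k, Module R (N k)]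

/-- Transport an element along an equality of degrees. -/
def dcast {a b : ℤ} (h : a = b) : M a →ₗ[R] M b where
  toFun x := h ▸ x
  map_add' := by subst h; intros; rfl
  map_smul' := by subst h; intros; rfl

/-- `d` is the differential of a chain complex: `d ∘ d = 0`. -/
def IsChainComplex (d : ∀ k, M k →ₗ[R] M (k - 1)) : Prop :=
  ∀ k, (d (k - 1)).comp (d k) = 0

/-- `φ` is a chain map from `(M, dM)` to `(N, dN)`. -/
def IsChainMap (dM : ∀ k, M k →ₗ[R] M (k - 1)) (dN : ∀ k, N k →ₗ[R] N (k - 1))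
    (φ : ∀ k, M k →ₗ[R] N k) : Prop :=
  ∀ k, (φ (k - 1)).comp (dM k) = (dN k).comp (φ k)

/-- The complexes `(M, dM)` and `(N, dN)` are isomorphic as chain complexes. -/
def ChainIso (dM : ∀ k, M k →ₗ[R] M (k - 1)) (dN : ∀ k, N k →ₗ[R] N (k - 1)) : Prop :=
  ∃ e : ∀ k, M k ≃ₗ[R] N k,
    ∀ k, ((e (k - 1)).toLinearMap).comp (dM k) = (dN k).comp (e k).toLinearMap

end Defs

section Hofib

variable {U V : ℤ → Type} [∀ k, AddCommGroup (U k)] [∀ k, Module R (U k)]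
  [∀ k, AddCommGroup (V k)] [∀ k, Module R (V k)]

/-- The differential of the explicit homotopy fiber `hofib(f)_k = U_k × V_{k+1}`,
`d (u, v) = (d u, -f(u) - d v)`. -/
def hofibD (dU : ∀ k, U k →ₗ[R] U (k - 1)) (dV : ∀ k, V k →ₗ[R] V (k - 1))
    (f : ∀ k, U k →ₗ[R] V k) (k : ℤ) :
    (U k × V (k + 1)) →ₗ[R] (U (k - 1) × V (k - 1 + 1)) :=
  LinearMap.prod ((dU k).comp (LinearMap.fst R (U k) (V (k + 1))))
    (- (dcast (show k = k - 1 + 1 by ring)).comp ((f k).comp (LinearMap.fst R (U k) (V (k + 1))))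
      - (dcast (show k + 1 - 1 = k - 1 + 1 by ring)).comp
          ((dV (k + 1)).comp (LinearMap.snd R (U k) (V (k + 1)))))

end Hofib

section Sq

variable (A B C D : ℤ → Type)
  [∀ k, AddCommGroup (A k)] [∀ k, Module R (A k)]
  [∀ k, AddCommGroup (B k)] [∀ k, Module R (B k)]
  [∀ k, AddCommGroup (C k)] [∀ k, Module R (C k)]
  [∀ k, AddCommGroup (D k)] [∀ k, Module R (D k)]

/-- projection onto the `A`-component of `A_k × B_{k+1} × C_{k+1} × D_{k+2}`. -/
def qA (k : ℤ) : (A k × B (k + 1) × C (k + 1) × D (k + 2)) →ₗ[R] A k :=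
  LinearMap.fst R _ _

/-- projection onto the `B`-component. -/
def qB (k : ℤ) : (A k × B (k + 1) × C (k + 1) × D (k + 2)) →ₗ[R] B (k + 1) :=
  (LinearMap.fst R _ _).comp (LinearMap.snd R (A k) _)

/-- projection onto the `C`-component. -/
def qC (k : ℤ) : (A k × B (k + 1) × C (k + 1) × D (k + 2)) →ₗ[R] C (k + 1) :=
  (LinearMap.fst R _ _).comp ((LinearMap.snd R (B (k + 1)) _).comp (LinearMap.snd R (A k) _))

/-- projection onto the `D`-component. -/
def qD (k : ℤ) : (A k × B (k + 1) × C (k + 1) × D (k + 2)) →ₗ[R] D (k + 2) :=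
  (LinearMap.snd R (C (k + 1)) _).comp
    ((LinearMap.snd R (B (k + 1)) _).comp (LinearMap.snd R (A k) _))

variable {A B C D}

/-- The differential of the iterated-fiber complex of a commuting square
`f : A → B`, `α : A → C`, `β : B → D`, `g : C → D`, with degree-`k` part
`A_k × B_{k+1} × C_{k+1} × D_{k+2}` and
`d (a, b, c, d) = (d a, -f(a) - d b, -α(a) - d c, -β(b) + g(c) + d d)`. -/
def SqD (dA : ∀ k, A k →ₗ[R] A (k - 1)) (dB : ∀ k, B k →ₗ[R] B (k - 1))
    (dC : ∀ k, C k →ₗ[R] C (k - 1)) (dD : ∀ k, D k →ₗ[R] D (k - 1))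
    (f : ∀ k, A k →ₗ[R] B k) (α : ∀ k, A k →ₗ[R] C k)
    (β : ∀ k, B k →ₗ[R] D k) (g : ∀ k, C k →ₗ[R] D k) (k : ℤ) :
    (A k × B (k + 1) × C (k + 1) × D (k + 2)) →ₗ[R]
      (A (k - 1) × B (k - 1 + 1) × C (k - 1 + 1) × D (k - 1 + 2)) :=
  LinearMap.prod ((dA k).comp (qA A B C D k)) <|
    LinearMap.prod
      (- (dcast (show k = k - 1 + 1 by ring)).comp ((f k).comp (qA A B C D k))
        - (dcast (show k + 1 - 1 = k - 1 + 1 by ring)).comp ((dB (k + 1)).comp (qB A B C D k))) <|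
      LinearMap.prod
        (- (dcast (show k = k - 1 + 1 by ring)).comp ((α k).comp (qA A B C D k))
          - (dcast (show k + 1 - 1 = k - 1 + 1 by ring)).comp ((dC (k + 1)).comp (qC A B C D k)))
        (- (dcast (show k + 1 = k - 1 + 2 by ring)).comp ((β (k + 1)).comp (qB A B C D k))
          + (dcast (show k + 1 = k - 1 + 2 by ring)).comp ((g (k + 1)).comp (qC A B C D k))
          + (dcast (show k + 2 - 1 = k - 1 + 2 by ring)).comp ((dD (k + 2)).comp (qD A B C D k)))

end Sq

section Homology

variable {M : ℤ → Type} [∀ k, AddCommGroup (M k)] [∀ k, Module R (M k)]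

/-- The boundaries-producing map `M_{k+1} → M_k`. -/
def bdry (d : ∀ k, M k →ₗ[R] M (k - 1)) (k : ℤ) : M (k + 1) →ₗ[R] M k :=
  (dcast (R := R) (M := M) (show k + 1 - 1 = k by ring)).comp (d (k + 1))

/-- Homology of `(M, d)` in degree `k`: cycles modulo boundaries. -/
abbrev homologyAt (d : ∀ k, M k →ₗ[R] M (k - 1)) (k : ℤ) :=
  ↥(LinearMap.ker (d k)) ⧸ Submodule.comap (LinearMap.ker (d k)).subtype
    (LinearMap.range (bdry d k))

/-- A complex is acyclic when all its homology modules vanish. -/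
def IsAcyclic (d : ∀ k, M k →ₗ[R] M (k - 1)) : Prop :=
  ∀ k, Subsingleton (homologyAt (R := R) d k)

end Homology

section Aux

variable {M N : ℤ → Type} [∀ k, AddCommGroup (M k)] [∀ k, Module R (M k)]
  [∀ k, AddCommGroup (N k)] [∀ k, Module R (N k)]

lemma dcast_rfl {a : ℤ} (h : a = a) (x : M a) : dcast (R := R) h x = x := rfl

lemma dcast_dcast {a b c : ℤ} (h1 : a = b) (h2 : b = c) (x : M a) :
    dcast (R := R) h2 (dcast (R := R) h1 x) = dcast (R := R) (h1.trans h2) x := by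
  subst h1; rfl

lemma dcast_eq_iff {a b : ℤ} (h : a = b) (x : M a) (y : M b) :
    dcast (R := R) h x = y ↔ x = dcast (R := R) h.symm y := by
  subst h; exact Iff.rfl

lemma map_dcast (φ : ∀ k, M k →ₗ[R] N k) {a b : ℤ} (h : a = b) (x : M a) :
    φ b (dcast (R := R) h x) = dcast (R := R) h (φ a x) := by
  subst h; rfl

lemma d_dcast (d : ∀ k, M k →ₗ[R] M (k - 1)) {a b : ℤ} (h : a = b) (hh : a - 1 = b - 1) (x : M a) :
    d b (dcast (R := R) h x) = dcast (R := R) hh (d a x) := by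
  subst h; rfl

lemma acyclic_ex {d : ∀ k, M k →ₗ[R] M (k - 1)} (hd : IsAcyclic (R := R) d)
    {j k : ℤ} (hjk : k - 1 = j) (x : M j) (hx : d j x = 0) :
    ∃ y : M k, dcast (R := R) hjk (d k y) = x := by
  have := hd j
  have h0 : (Submodule.Quotient.mk (⟨x, hx⟩ : LinearMap.ker (d j)) :
      homologyAt (R := R) d j) = Submodule.Quotient.mk 0 := Subsingleton.elim _ _
  rw [Submodule.Quotient.eq] at h0
  simp only [sub_zero, Submodule.mem_comap, Submodule.coe_subtype, LinearMap.mem_range] at h0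
  obtain ⟨y0, hy0⟩ := h0
  refine ⟨dcast (R := R) (show j + 1 = k by omega) y0, ?_⟩
  rw [d_dcast d _ (show j + 1 - 1 = k - 1 by omega), dcast_dcast]
  exact hy0

end Aux
lemma dcast_inj {M : ℤ → Type} [∀ k, AddCommGroup (M k)] [∀ k, Module R (M k)]
    {a b : ℤ} (h : a = b) (x y : M a) :
    dcast (R := R) h x = dcast (R := R) h y ↔ x = y := by
  subst h; exact Iff.rfl

lemma bdry_apply {M : ℤ → Type} [∀ k, AddCommGroup (M k)] [∀ k, Module R (M k)]
    (d : ∀ k, M k →ₗ[R] M (k - 1)) (k : ℤ) (y : M (k + 1)) :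
    bdry (R := R) d k y = dcast (R := R) (show k + 1 - 1 = k by ring) (d (k+1) y) := rfl
set_option maxHeartbeats 1000000 in
/-- given a commuting square `β ∘ f = g ∘ α` of chain complexes in which `B` and
`C` are acyclic and the iterated-fiber complex of the square is acyclic, there are
isomorphisms `H_k(A) ≅ H_{k+1}(D)` for all `k`. -/
theorem stmt_7 {A B C D : ℤ → Type}
    [∀ k, AddCommGroup (A k)] [∀ k, Module R (A k)]
    [∀ k, AddCommGroup (B k)] [∀ k, Module R (B k)]
    [∀ k, AddCommGroup (C k)] [∀ k, Module R (C k)]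
    [∀ k, AddCommGroup (D k)] [∀ k, Module R (D k)]
    (dA : ∀ k, A k →ₗ[R] A (k - 1)) (dB : ∀ k, B k →ₗ[R] B (k - 1))
    (dC : ∀ k, C k →ₗ[R] C (k - 1)) (dD : ∀ k, D k →ₗ[R] D (k - 1))
    (hA : IsChainComplex dA) (hB : IsChainComplex dB)
    (hC : IsChainComplex dC) (hD : IsChainComplex dD)
    (f : ∀ k, A k →ₗ[R] B k) (α : ∀ k, A k →ₗ[R] C k)
    (β : ∀ k, B k →ₗ[R] D k) (g : ∀ k, C k →ₗ[R] D k)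
    (hf : IsChainMap dA dB f) (hα : IsChainMap dA dC α)
    (hβ : IsChainMap dB dD β) (hg : IsChainMap dC dD g)
    (hsq : ∀ k, (β k).comp (f k) = (g k).comp (α k))
    (hBacyc : IsAcyclic dB) (hCacyc : IsAcyclic dC)
    (hSqacyc : IsAcyclic (M := fun k => A k × B (k + 1) × C (k + 1) × D (k + 2))
      (SqD dA dB dC dD f α β g)) :
    ∀ k : ℤ, Nonempty (homologyAt (R := R) dA k ≃ₗ[R] homologyAt (R := R) dD (k + 1)) := by
  -- elementwise versions of hypotheses
  have hf' : ∀ m (x : A m), f (m-1) (dA m x) = dB m (f m x) :=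
    fun m x => LinearMap.congr_fun (hf m) x
  have hα' : ∀ m (x : A m), α (m-1) (dA m x) = dC m (α m x) :=
    fun m x => LinearMap.congr_fun (hα m) x
  have hβ' : ∀ m (x : B m), β (m-1) (dB m x) = dD m (β m x) :=
    fun m x => LinearMap.congr_fun (hβ m) x
  have hg' : ∀ m (x : C m), g (m-1) (dC m x) = dD m (g m x) :=
    fun m x => LinearMap.congr_fun (hg m) x
  have hsq' : ∀ m (x : A m), β m (f m x) = g m (α m x) :=
    fun m x => LinearMap.congr_fun (hsq m) x
  have SqD_apply : ∀ (m : ℤ) (x : A m × B (m+1) × C (m+1) × D (m+2)),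
      SqD dA dB dC dD f α β g m x =
      (dA m x.1,
       - dcast (R:=R) (show m = m-1+1 by ring) (f m x.1)
         - dcast (R:=R) (show m+1-1 = m-1+1 by ring) (dB (m+1) x.2.1),
       - dcast (R:=R) (show m = m-1+1 by ring) (α m x.1)
         - dcast (R:=R) (show m+1-1 = m-1+1 by ring) (dC (m+1) x.2.2.1),
       - dcast (R:=R) (show m+1 = m-1+2 by ring) (β (m+1) x.2.1)
         + dcast (R:=R) (show m+1 = m-1+2 by ring) (g (m+1) x.2.2.1)
         + dcast (R:=R) (show m+2-1 = m-1+2 by ring) (dD (m+2) x.2.2.2)) :=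
    fun m x => rfl
  have Tdcast : ∀ (a b : ℤ) (h : a = b) (ha : a + 1 = b + 1) (ha2 : a + 2 = b + 2)
      (x : A a × B (a+1) × C (a+1) × D (a+2)),
      dcast (R := R) (M := fun k => A k × B (k+1) × C (k+1) × D (k+2)) h x =
      (dcast (R:=R) h x.1, dcast (R:=R) ha x.2.1, dcast (R:=R) ha x.2.2.1,
        dcast (R:=R) ha2 x.2.2.2) := by
    intro a b h ha ha2 x; subst h; rfl
  intro k
  have hk1 : k = k + 1 - 1 := by ring
  -- the module of "witnessed cycles"
  let Z : Submodule R (A k × B (k+1) × C (k+1)) := {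
    carrier := {x | dA k x.1 = 0 ∧ dB (k+1) x.2.1 = - dcast (R:=R) hk1 (f k x.1)
      ∧ dC (k+1) x.2.2 = - dcast (R:=R) hk1 (α k x.1)}
    add_mem' := by
      rintro x y ⟨h1, h2, h3⟩ ⟨h4, h5, h6⟩
      refine ⟨?_, ?_, ?_⟩ <;>
        simp only [Prod.fst_add, Prod.snd_add, map_add, h1, h2, h3, h4, h5, h6] <;> abel
    zero_mem' := by
      refine ⟨?_, ?_, ?_⟩ <;> simp
    smul_mem' := by
      rintro r x ⟨h1, h2, h3⟩
      refine ⟨?_, ?_, ?_⟩ <;>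
        simp only [Prod.smul_fst, Prod.smul_snd, map_smul, h1, h2, h3, smul_zero, smul_neg] }
  have hZmem : ∀ x : A k × B (k+1) × C (k+1), x ∈ Z ↔
      (dA k x.1 = 0 ∧ dB (k+1) x.2.1 = - dcast (R:=R) hk1 (f k x.1)
      ∧ dC (k+1) x.2.2 = - dcast (R:=R) hk1 (α k x.1)) := fun x => Iff.rfl
  let p0 : Z →ₗ[R] LinearMap.ker (dA k) :=
    LinearMap.codRestrict _ ((LinearMap.fst R (A k) _).comp Z.subtype)
      (fun z => LinearMap.mem_ker.mpr ((hZmem z.1).mp z.2).1)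
  let p : Z →ₗ[R] homologyAt (R := R) dA k :=
    (Submodule.mkQ _).comp p0
  let mψ : Z →ₗ[R] D (k+1) :=
    (- (β (k+1)).comp ((LinearMap.fst R (B (k+1)) (C (k+1))).comp
        ((LinearMap.snd R (A k) _).comp Z.subtype)))
      + (g (k+1)).comp ((LinearMap.snd R (B (k+1)) (C (k+1))).comp
        ((LinearMap.snd R (A k) _).comp Z.subtype))
  have mψ_apply : ∀ z : Z, mψ z = - β (k+1) z.1.2.1 + g (k+1) z.1.2.2 := fun z => rfl
  have hmψ : ∀ z : Z, dD (k+1) (mψ z) = 0 := by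
    intro z
    obtain ⟨h1, h2, h3⟩ := (hZmem z.1).mp z.2
    rw [mψ_apply, map_add, map_neg, ← hβ' (k+1), ← hg' (k+1), h2, h3, map_neg, map_neg,
      map_dcast β hk1, map_dcast g hk1, hsq']
    abel
  let ψ0 : Z →ₗ[R] LinearMap.ker (dD (k+1)) :=
    LinearMap.codRestrict _ mψ (fun z => LinearMap.mem_ker.mpr (hmψ z))
  let ψ : Z →ₗ[R] homologyAt (R := R) dD (k+1) :=
    (Submodule.mkQ _).comp ψ0
  have hp : Function.Surjective p := by
    intro y
    obtain ⟨⟨a, ha⟩, rfl⟩ := Submodule.Quotient.mk_surjective _ y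
    have ha' : dA k a = 0 := LinearMap.mem_ker.mp ha
    have hb : dB k (f k a) = 0 := by rw [← hf' k a, ha', map_zero]
    have hc : dC k (α k a) = 0 := by rw [← hα' k a, ha', map_zero]
    obtain ⟨b0, hb0⟩ := acyclic_ex hBacyc (show k + 1 - 1 = k by ring) (f k a) hb
    obtain ⟨c0, hc0⟩ := acyclic_ex hCacyc (show k + 1 - 1 = k by ring) (α k a) hc
    have hb0' : dB (k+1) b0 = dcast (R:=R) hk1 (f k a) :=
      (dcast_eq_iff _ _ _).mp hb0
    have hc0' : dC (k+1) c0 = dcast (R:=R) hk1 (α k a) :=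
      (dcast_eq_iff _ _ _).mp hc0
    have hz : (a, -b0, -c0) ∈ Z := by
      refine (hZmem _).mpr ⟨ha', ?_, ?_⟩
      · rw [map_neg, hb0']
      · rw [map_neg, hc0']
    refine ⟨⟨(a, -b0, -c0), hz⟩, ?_⟩
    show Submodule.Quotient.mk (p0 ⟨(a, -b0, -c0), hz⟩) = Submodule.Quotient.mk ⟨a, ha⟩
    rfl
  have hψ : Function.Surjective ψ := by
    intro y
    obtain ⟨⟨z0, hz0⟩, rfl⟩ := Submodule.Quotient.mk_surjective _ y
    have hz0' : dD (k+1) z0 = 0 := LinearMap.mem_ker.mp hz0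
    have hds : dD (k-1+2) (dcast (R:=R) (show k+1 = k-1+2 by ring) z0) = 0 := by
      rw [d_dcast dD _ (show k+1-1 = k-1+2-1 by ring), hz0', map_zero]
    have hs : SqD dA dB dC dD f α β g (k-1)
        ((0 : A (k-1)), (0 : B (k-1+1)), (0 : C (k-1+1)),
          dcast (R:=R) (show k+1 = k-1+2 by ring) z0) = 0 := by
      rw [SqD_apply]
      simp [Prod.ext_iff, hds]
    obtain ⟨t, ht⟩ := acyclic_ex hSqacyc (show k - 1 = k - 1 from rfl) _ hs
    rw [dcast_rfl] at ht
    obtain ⟨a, b, c, d2⟩ := t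
    rw [SqD_apply] at ht
    simp only [Prod.mk.injEq] at ht
    obtain ⟨ht1, ht2, ht3, ht4⟩ := ht
    have hzb : dB (k+1) b = - dcast (R:=R) hk1 (f k a) := by
      rw [sub_eq_zero] at ht2
      have h := (dcast_eq_iff _ _ _).mp ht2.symm
      rwa [map_neg, dcast_dcast] at h
    have hzc : dC (k+1) c = - dcast (R:=R) hk1 (α k a) := by
      rw [sub_eq_zero] at ht3
      have h := (dcast_eq_iff _ _ _).mp ht3.symm
      rwa [map_neg, dcast_dcast] at h
    have hzmem : (a, b, c) ∈ Z := (hZmem _).mpr ⟨ht1, hzb, hzc⟩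
    refine ⟨⟨(a, b, c), hzmem⟩, ?_⟩
    show Submodule.Quotient.mk (ψ0 ⟨(a,b,c), hzmem⟩) = Submodule.Quotient.mk ⟨z0, hz0⟩
    rw [Submodule.Quotient.eq]
    have hb4 : bdry (R:=R) dD (k+1) (dcast (R:=R) (show k+2 = k+1+1 by ring) (-d2))
        = (- β (k+1) b + g (k+1) c) - z0 := by
      rw [bdry_apply dD, d_dcast dD (show k+2 = k+1+1 by ring) (show k+2-1 = k+1+1-1 by ring), dcast_dcast]
      refine (dcast_inj (R:=R) (M:=D) (show k+1 = k-1+2 by ring) _ _).mp ?_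
      rw [dcast_dcast, map_neg, map_sub, map_add, map_neg, ← ht4, map_neg]
      abel
    exact Submodule.mem_comap.mpr ⟨_, hb4⟩
  have hker : LinearMap.ker p = LinearMap.ker ψ := by
    ext z
    obtain ⟨⟨a, b, c⟩, hz⟩ := z
    obtain ⟨h1, h2, h3⟩ := (hZmem _).mp hz
    simp only [LinearMap.mem_ker]
    constructor
    · intro hpz
      -- p z = 0 gives a = boundary of a'
      have hpz' : (p0 ⟨(a,b,c), hz⟩) ∈ Submodule.comap (LinearMap.ker (dA k)).subtype
          (LinearMap.range (bdry (R:=R) dA k)) := by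
        rwa [show p ⟨(a,b,c), hz⟩ = Submodule.Quotient.mk (p0 ⟨(a,b,c), hz⟩) from rfl,
          Submodule.Quotient.mk_eq_zero] at hpz
      obtain ⟨a', ha'⟩ := Submodule.mem_comap.mp hpz'
      have ha'' : dcast (R:=R) (show k+1-1 = k by ring) (dA (k+1) a') = a := by
        rw [← bdry_apply dA]; exact ha'
      -- b + f a' is a cycle
      have hXb : dB (k+1) (b + f (k+1) a') = 0 := by
        rw [map_add, h2, ← hf' (k+1) a', ← ha'', map_dcast f, dcast_dcast, dcast_rfl]
        abel
      have hXc : dC (k+1) (c + α (k+1) a') = 0 := by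
        rw [map_add, h3, ← hα' (k+1) a', ← ha'', map_dcast α, dcast_dcast, dcast_rfl]
        abel
      obtain ⟨b'', hb''⟩ := acyclic_ex hBacyc (show k+2-1 = k+1 by ring) _ hXb
      obtain ⟨c'', hc''⟩ := acyclic_ex hCacyc (show k+2-1 = k+1 by ring) _ hXc
      have hb''' : dB (k+2) b'' = dcast (R:=R) (show k+1 = k+2-1 by ring) (b + f (k+1) a') :=
        (dcast_eq_iff _ _ _).mp hb''
      have hc''' : dC (k+2) c'' = dcast (R:=R) (show k+1 = k+2-1 by ring) (c + α (k+1) a') :=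
        (dcast_eq_iff _ _ _).mp hc''
      show Submodule.Quotient.mk (ψ0 ⟨(a,b,c), hz⟩) = 0
      rw [Submodule.Quotient.mk_eq_zero]
      refine Submodule.mem_comap.mpr
        ⟨dcast (R:=R) (show k+2 = k+1+1 by ring) (- β (k+2) b'' + g (k+2) c''), ?_⟩
      show bdry (R:=R) dD (k+1) _ = - β (k+1) b + g (k+1) c
      have hβb : dcast (R:=R) (show k+2-1 = k+1 by ring) (dD (k+2) (β (k+2) b''))
          = β (k+1) b + β (k+1) (f (k+1) a') := by
        rw [← hβ' (k+2) b'', hb''', map_dcast β, dcast_dcast, dcast_rfl, map_add]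
      have hgc : dcast (R:=R) (show k+2-1 = k+1 by ring) (dD (k+2) (g (k+2) c''))
          = g (k+1) c + g (k+1) (α (k+1) a') := by
        rw [← hg' (k+2) c'', hc''', map_dcast g, dcast_dcast, dcast_rfl, map_add]
      rw [bdry_apply dD, d_dcast dD (show k+2 = k+1+1 by ring) (show k+2-1 = k+1+1-1 by ring),
        dcast_dcast]
      rw [map_add, map_neg]
      rw [map_add, map_neg]
      rw [hβb, hgc, hsq' (k+1) a']
      abel
    · intro hψz
      have hψz' : (ψ0 ⟨(a,b,c), hz⟩) ∈ Submodule.comap (LinearMap.ker (dD (k+1))).subtype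
          (LinearMap.range (bdry (R:=R) dD (k+1))) := by
        rwa [show ψ ⟨(a,b,c), hz⟩ = Submodule.Quotient.mk (ψ0 ⟨(a,b,c), hz⟩) from rfl,
          Submodule.Quotient.mk_eq_zero] at hψz
      obtain ⟨d0, hd0⟩ := Submodule.mem_comap.mp hψz'
      have hd0' : dcast (R:=R) (show k+1+1-1 = k+1 by ring) (dD (k+1+1) d0)
          = - β (k+1) b + g (k+1) c := by
        rw [← bdry_apply dD]; exact hd0
      -- build a cycle in the total complex
      have hcyc : SqD dA dB dC dD f α β g k
          (a, b, c, - dcast (R:=R) (show k+1+1 = k+2 by ring) d0) = 0 := by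
        rw [SqD_apply]
        refine Prod.ext ?_ (Prod.ext ?_ (Prod.ext ?_ ?_))
        · exact h1
        · show - dcast (R:=R) (show k = k-1+1 by ring) (f k a)
            - dcast (R:=R) (show k+1-1 = k-1+1 by ring) (dB (k+1) b) = 0
          rw [h2, map_neg, dcast_dcast]
          abel
        · show - dcast (R:=R) (show k = k-1+1 by ring) (α k a)
            - dcast (R:=R) (show k+1-1 = k-1+1 by ring) (dC (k+1) c) = 0
          rw [h3, map_neg, dcast_dcast]
          abel
        · show - dcast (R:=R) (show k+1 = k-1+2 by ring) (β (k+1) b)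
            + dcast (R:=R) (show k+1 = k-1+2 by ring) (g (k+1) c)
            + dcast (R:=R) (show k+2-1 = k-1+2 by ring)
                (dD (k+2) (- dcast (R:=R) (show k+1+1 = k+2 by ring) d0)) = 0
          have hd0'' : dD (k+1+1) d0
              = dcast (R:=R) (show k+1 = k+1+1-1 by ring) (- β (k+1) b + g (k+1) c) :=
            (dcast_eq_iff _ _ _).mp hd0'
          rw [map_neg, d_dcast dD (show k+1+1 = k+2 by ring) (show k+1+1-1 = k+2-1 by ring),
            map_neg, dcast_dcast, hd0'', dcast_dcast, map_add, map_neg]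
          abel
      obtain ⟨t', ht'⟩ := acyclic_ex hSqacyc (show k+1-1 = k by ring) _ hcyc
      rw [SqD_apply, Tdcast (k+1-1) k (show k+1-1 = k by ring) (by omega) (by omega)] at ht'
      have ht1 : dcast (R:=R) (show k+1-1 = k by ring) (dA (k+1) t'.1) = a :=
        congrArg Prod.fst ht'
      show Submodule.Quotient.mk (p0 ⟨(a,b,c), hz⟩) = 0
      rw [Submodule.Quotient.mk_eq_zero]
      refine Submodule.mem_comap.mpr ⟨t'.1, ?_⟩
      show bdry (R:=R) dA k t'.1 = a
      rw [bdry_apply dA]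
      exact ht1
  exact ⟨((LinearMap.quotKerEquivOfSurjective p hp).symm.trans
    ((Submodule.quotEquivOfEq _ _ hker).trans (LinearMap.quotKerEquivOfSurjective ψ hψ)))⟩
end

section
/- For any n-cube X of ℤ-indexed chain complexes of R-modules, the map ξ : tX → t²X which sends an element x of the summand of tX indexed by T ⊆ {1,…,n} to the sum, over all ordered pairs (V₁, V₂) of disjoint subsets of {1,…,n} with V₁ ∪ V₂ = T, of (−1)^{sgn(V₁,V₂)} x placed in the summand of t²X indexed by (V₁, V₂), is a chain map. -/
open scoped Classical

variable {R : Type} [CommRing R]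

/-- An `ι`-indexed cube of chain complexes of `R`-modules: the data of a chain complex
`ob S` for every `S ⊆ ι` and a degreewise map `ob S → ob T` for every inclusion `S ⊆ T`.
(The conditions that each `ob S` is a complex, each `map` is a chain map, and the
assignment is functorial are stated separately below.) -/
structure Cube (R : Type) [CommRing R] (ι : Type) [DecidableEq ι] where
  ob : Finset ι → ℤ → Type
  [acg : ∀ S k, AddCommGroup (ob S k)]
  [mod : ∀ S k, Module R (ob S k)]
  d : ∀ S k, ob S k →ₗ[R] ob S (k - 1)
  map : ∀ S T, S ⊆ T → ∀ k, ob S k →ₗ[R] ob T k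

attribute [instance] Cube.acg Cube.mod

namespace Cube

variable {ι : Type} [DecidableEq ι]

/-- Transport along equalities of the indexing subset and of the degree. -/
def cast (X : Cube R ι) {S T : Finset ι} {a b : ℤ} (h1 : S = T) (h2 : a = b) :
    X.ob S a →ₗ[R] X.ob T b where
  toFun x := h1 ▸ h2 ▸ x
  map_add' := by subst h1; subst h2; intros; rfl
  map_smul' := by subst h1; subst h2; intros; rfl

/-- Each `ob S` is a chain complex. -/
def IsComplex (X : Cube R ι) : Prop := ∀ S, IsChainComplex (R := R) (X.d S)

/-- Each structure map is a chain map. -/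
def MapsAreChain (X : Cube R ι) : Prop :=
  ∀ S T (h : S ⊆ T), IsChainMap (R := R) (X.d S) (X.d T) (fun k => X.map S T h k)

/-- The structure maps are functorial, i.e. `X` is a functor on the poset of subsets. -/
def IsFunctorial (X : Cube R ι) : Prop :=
  (∀ S k, X.map S S (subset_refl S) k = LinearMap.id) ∧
  (∀ S T U (hST : S ⊆ T) (hTU : T ⊆ U) k,
    (X.map T U hTU k).comp (X.map S T hST k) = X.map S U (hST.trans hTU) k)

end Cube

section T

variable {ι : Type} [DecidableEq ι] [LinearOrder ι]

/-- `sgn(σᵢ^S) = |{s ∈ S : s > i}|`. -/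
def sgnIns (i : ι) (S : Finset ι) : ℕ := (S.filter fun s => i < s).card

/-- The degree-`k` part of the explicit iterated-fiber complex `tX`:
the direct sum over `T ⊆ ι` of `X(T)_{k + |T|}`. -/
abbrev tOb (X : Cube R ι) (k : ℤ) : Type := ∀ T : Finset ι, X.ob T (k + T.card)

/-- The differential of `tX`: it sends an element `x` of the summand indexed by `T` to
`(-1)^{|T|} d(x)` plus the sum over `i ∉ T` of `(-1)^{sgn(σᵢ^T) + 1} X(T ⊆ T ∪ {i})(x)`
placed in the summand indexed by `T ∪ {i}`. -/
noncomputable def tD (X : Cube R ι) (k : ℤ) : tOb X k →ₗ[R] tOb X (k - 1) :=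
  LinearMap.pi fun T =>
    (((-1 : R) ^ T.card) •
      ((X.cast rfl (show k + (T.card : ℤ) - 1 = k - 1 + T.card by ring)).comp
        ((X.d T (k + T.card)).comp (LinearMap.proj T))))
    + ∑ i ∈ T.attach,
      (((-1 : R) ^ (sgnIns i.1 (T.erase i.1) + 1)) •
        ((X.cast rfl (show k + ((T.erase i.1).card : ℤ) = k - 1 + T.card by
            have h1 := Finset.card_erase_of_mem i.2
            have h2 : 0 < T.card := Finset.card_pos.mpr ⟨i.1, i.2⟩
            omega)).comp
          ((X.map (T.erase i.1) T (Finset.erase_subset _ _) (k + (T.erase i.1).card)).comp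
            (LinearMap.proj (T.erase i.1)))))


section Double

/-- The linear order on a disjoint union `α ⊕ β` in which everything in `α` precedes
everything in `β` (corresponding to the identification of `{1, …, 2n}` with two copies of
`{1, …, n}`). -/
instance sumLinearOrder {α β : Type} [LinearOrder α] [LinearOrder β] : LinearOrder (α ⊕ β) :=
  inferInstanceAs (LinearOrder (α ⊕ₗ β))

variable {ι : Type} [DecidableEq ι]

/-- The `2n`-cube `C` associated to an `n`-cube `X`: identifying a subset `W ⊆ {1, …, 2n}`
with the pair `(W₁, W₂)` of subsets of `{1, …, n}`, it is given by `C(W) = X(W₁ ∪ W₂)`. -/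
def Cube.dbl (X : Cube R ι) : Cube R (ι ⊕ ι) where
  ob W k := X.ob (W.toLeft ∪ W.toRight) k
  d W k := X.d _ k
  map W W' h k := X.map _ _
    (Finset.union_subset_union (Finset.toLeft_subset_toLeft h)
      (Finset.toRight_subset_toRight h)) k

variable [LinearOrder ι]

/-- `sgn(S, T) = |{(i, j) : i < j, i ∈ T, j ∈ S}|`, the sign statistic associated to the
`2 × n` 0–1 matrix whose first row is the indicator of `S` and second row the indicator
of `T`. -/
def sgn2 (S T : Finset ι) : ℕ := ((T ×ˢ S).filter fun p => p.1 < p.2).card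

/-- The map `ξ : tX → t²X`: it sends an element `x` of the summand indexed by `T` to the
sum, over all ordered pairs `(V₁, V₂)` of disjoint subsets with `V₁ ∪ V₂ = T`, of
`(-1)^{sgn(V₁, V₂)} x` placed in the summand of `t²X` indexed by `(V₁, V₂)`. -/
noncomputable def xiMap (X : Cube R ι) (k : ℤ) : tOb X k →ₗ[R] tOb X.dbl k :=
  LinearMap.pi fun W =>
    if h : Disjoint W.toLeft W.toRight then
      ((-1 : R) ^ sgn2 W.toLeft W.toRight) •
        ((X.cast rfl (show k + (((W.toLeft ∪ W.toRight) : Finset ι).card : ℤ) = k + W.card by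
            rw [Finset.card_union_of_disjoint h,
              ← Finset.card_toLeft_add_card_toRight (u := W)])).comp
          (LinearMap.proj (W.toLeft ∪ W.toRight)))
    else 0

end Double


section Aux

open Finset

variable {ι : Type} [DecidableEq ι] [LinearOrder ι]

lemma sgn2_eq_sum (S T : Finset ι) : sgn2 S T = ∑ s ∈ S, (T.filter (· < s)).card := by
  rw [sgn2, Finset.card_eq_sum_card_fiberwise (f := Prod.snd) (t := S)
    (fun p hp => (Finset.mem_product.1 (Finset.mem_filter.1 hp).1).2)]
  refine Finset.sum_congr rfl fun s _ => ?_
  have h : ((T ×ˢ S).filter fun p => p.1 < p.2).filter (fun p => p.2 = s)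
      = (T.filter (· < s)).map ⟨fun t => (t, s), fun a b h => by simpa using congrArg Prod.fst h⟩ := by
    ext ⟨a, b⟩
    simp only [Finset.mem_filter, Finset.mem_product, Finset.mem_map, Function.Embedding.coeFn_mk]
    constructor
    · rintro ⟨⟨⟨ha, hb⟩, hlt⟩, rfl⟩; exact ⟨a, ⟨ha, hlt⟩, rfl⟩
    · rintro ⟨t, ⟨ht, hlt⟩, h⟩
      cases h
      exact ⟨⟨⟨ht, ‹s ∈ S›⟩, hlt⟩, rfl⟩
  rw [h, Finset.card_map]

lemma sgn2_eq_sum' (S T : Finset ι) : sgn2 S T = ∑ t ∈ T, (S.filter (t < ·)).card := by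
  rw [sgn2, Finset.card_eq_sum_card_fiberwise (f := Prod.fst) (t := T)
    (fun p hp => (Finset.mem_product.1 (Finset.mem_filter.1 hp).1).1)]
  refine Finset.sum_congr rfl fun t _ => ?_
  have h : ((T ×ˢ S).filter fun p => p.1 < p.2).filter (fun p => p.1 = t)
      = (S.filter (t < ·)).map ⟨fun s => (t, s), fun a b h => by simpa using congrArg Prod.snd h⟩ := by
    ext ⟨a, b⟩
    simp only [Finset.mem_filter, Finset.mem_product, Finset.mem_map, Function.Embedding.coeFn_mk]
    constructor
    · rintro ⟨⟨⟨ha, hb⟩, hlt⟩, rfl⟩; exact ⟨b, ⟨hb, hlt⟩, rfl⟩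
    · rintro ⟨u, ⟨hu, hlt⟩, h⟩
      cases h
      exact ⟨⟨⟨‹t ∈ T›, hu⟩, hlt⟩, rfl⟩
  rw [h, Finset.card_map]

lemma sgn2_erase_left {L : Finset ι} (Q : Finset ι) {a : ι} (ha : a ∈ L) :
    sgn2 L Q = sgn2 (L.erase a) Q + (Q.filter (· < a)).card := by
  rw [sgn2_eq_sum, sgn2_eq_sum, ← Finset.sum_erase_add _ _ ha]

lemma sgn2_erase_right (L : Finset ι) {Q : Finset ι} {a : ι} (ha : a ∈ Q) :
    sgn2 L Q = sgn2 L (Q.erase a) + (L.filter (a < ·)).card := by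
  rw [sgn2_eq_sum', sgn2_eq_sum', ← Finset.sum_erase_add _ _ ha]

lemma sgnIns_erase (a : ι) (S : Finset ι) : sgnIns a (S.erase a) = (S.filter (a < ·)).card := by
  unfold sgnIns
  congr 1
  ext s
  simp only [Finset.mem_filter, Finset.mem_erase]
  exact ⟨fun ⟨⟨_, hs⟩, hlt⟩ => ⟨hs, hlt⟩, fun ⟨hs, hlt⟩ => ⟨⟨ne_of_gt hlt, hs⟩, hlt⟩⟩

lemma card_filter_lt_add (a : ι) (Q : Finset ι) (ha : a ∉ Q) :
    (Q.filter (· < a)).card + (Q.filter (a < ·)).card = Q.card := by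
  have key := Finset.card_filter_add_card_filter_not (s := Q) (p := (· < a))
  have heq : Q.filter (fun q => ¬ q < a) = Q.filter (a < ·) := by
    ext q
    simp only [Finset.mem_filter, not_lt]
    exact ⟨fun hq => ⟨hq.1, lt_of_le_of_ne hq.2 fun h => ha (by rw [h]; exact hq.1)⟩,
      fun hq => ⟨hq.1, le_of_lt hq.2⟩⟩
  rw [heq] at key
  exact key

lemma card_filter_lt_add' (a : ι) (Q : Finset ι) (ha : a ∈ Q) :
    (Q.filter (· < a)).card + (Q.filter (a < ·)).card + 1 = Q.card := by
  have h1 : Q.card = (Q.erase a).card + 1 := (Finset.card_erase_add_one ha).symm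
  have h2 : (Q.filter (· < a)) = ((Q.erase a).filter (· < a)) := by
    ext q; simp only [Finset.mem_filter, Finset.mem_erase]
    exact ⟨fun ⟨hq, hlt⟩ => ⟨⟨ne_of_lt hlt, hq⟩, hlt⟩, fun ⟨⟨_, hq⟩, hlt⟩ => ⟨hq, hlt⟩⟩
  have h3 : (Q.filter (a < ·)) = ((Q.erase a).filter (a < ·)) := by
    ext q; simp only [Finset.mem_filter, Finset.mem_erase]
    exact ⟨fun ⟨hq, hlt⟩ => ⟨⟨ne_of_gt hlt, hq⟩, hlt⟩, fun ⟨⟨_, hq⟩, hlt⟩ => ⟨hq, hlt⟩⟩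
  rw [h1, h2, h3, card_filter_lt_add a _ (Finset.notMem_erase a Q)]

lemma erase_union_left {L Q : Finset ι} {a : ι} (haQ : a ∉ Q) :
    (L ∪ Q).erase a = (L.erase a) ∪ Q := by
  ext s
  simp only [Finset.mem_erase, Finset.mem_union]
  constructor
  · rintro ⟨hne, hs | hs⟩
    · exact Or.inl ⟨hne, hs⟩
    · exact Or.inr hs
  · rintro (⟨hne, hs⟩ | hs)
    · exact ⟨hne, Or.inl hs⟩
    · exact ⟨by rintro rfl; exact haQ hs, Or.inr hs⟩

lemma erase_union_right {L Q : Finset ι} {a : ι} (haL : a ∉ L) :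
    (L ∪ Q).erase a = L ∪ (Q.erase a) := by
  ext s
  simp only [Finset.mem_erase, Finset.mem_union]
  constructor
  · rintro ⟨hne, hs | hs⟩
    · exact Or.inl hs
    · exact Or.inr ⟨hne, hs⟩
  · rintro (hs | ⟨hne, hs⟩)
    · exact ⟨by rintro rfl; exact haL hs, Or.inl hs⟩
    · exact ⟨hne, Or.inr hs⟩

lemma sgnIns_union_left {L Q : Finset ι} (hd : Disjoint L Q) {a : ι} (ha : a ∈ L) :
    sgnIns a ((L ∪ Q).erase a) = sgnIns a (L.erase a) + (Q.filter (a < ·)).card := by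
  have haQ : a ∉ Q := Finset.disjoint_left.1 hd ha
  rw [erase_union_left haQ]
  unfold sgnIns
  rw [Finset.filter_union, Finset.card_union_of_disjoint
    (Finset.disjoint_filter_filter (hd.mono (Finset.erase_subset a L) le_rfl))]

lemma sgnIns_union_right {L Q : Finset ι} (hd : Disjoint L Q) {a : ι} (ha : a ∈ Q) :
    sgnIns a ((L ∪ Q).erase a) = (L.filter (a < ·)).card + sgnIns a (Q.erase a) := by
  have haL : a ∉ L := Finset.disjoint_right.1 hd ha
  rw [erase_union_right haL]
  unfold sgnIns
  rw [Finset.filter_union, Finset.card_union_of_disjoint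
    (Finset.disjoint_filter_filter (hd.mono le_rfl (Finset.erase_subset a Q)))]



abbrev sLT (ι : Type) [LinearOrder ι] : LT (ι ⊕ ι) :=
  @Preorder.toLT _ (@PartialOrder.toPreorder _ (@LinearOrder.toPartialOrder _ sumLinearOrder))

lemma inl_lt_inl' {a b : ι} : @LT.lt (ι ⊕ ι) (sLT ι) (Sum.inl a) (Sum.inl b) ↔ a < b :=
  Sum.Lex.inl_lt_inl_iff
lemma inl_lt_inr' (a b : ι) : @LT.lt (ι ⊕ ι) (sLT ι) (Sum.inl a) (Sum.inr b) :=
  Sum.Lex.inl_lt_inr _ _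
lemma not_inr_lt_inl' {a b : ι} : ¬ @LT.lt (ι ⊕ ι) (sLT ι) (Sum.inr a) (Sum.inl b) :=
  Sum.Lex.not_inr_lt_inl
lemma inr_lt_inr' {a b : ι} : @LT.lt (ι ⊕ ι) (sLT ι) (Sum.inr a) (Sum.inr b) ↔ a < b :=
  Sum.Lex.inr_lt_inr_iff

lemma toLeft_erase_inl (W : Finset (ι ⊕ ι)) (i : ι) :
    (W.erase (Sum.inl i)).toLeft = W.toLeft.erase i := by
  ext a; simp [Finset.mem_toLeft, Finset.mem_erase]
lemma toRight_erase_inl (W : Finset (ι ⊕ ι)) (i : ι) :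
    (W.erase (Sum.inl i)).toRight = W.toRight := by
  ext a; simp [Finset.mem_toRight, Finset.mem_erase]
lemma toLeft_erase_inr (W : Finset (ι ⊕ ι)) (i : ι) :
    (W.erase (Sum.inr i)).toLeft = W.toLeft := by
  ext a; simp [Finset.mem_toLeft, Finset.mem_erase]
lemma toRight_erase_inr (W : Finset (ι ⊕ ι)) (i : ι) :
    (W.erase (Sum.inr i)).toRight = W.toRight.erase i := by
  ext a; simp [Finset.mem_toRight, Finset.mem_erase]

lemma card_filter_sumFinset (S : Finset (ι ⊕ ι)) (P : ι ⊕ ι → Prop) [DecidablePred P] :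
    (S.filter P).card
      = (S.toLeft.filter (fun a => P (Sum.inl a))).card
        + (S.toRight.filter (fun a => P (Sum.inr a))).card := by
  rw [← Finset.card_toLeft_add_card_toRight (u := S.filter P)]
  congr 2
  · ext a; simp [Finset.mem_toLeft]
  · ext a; simp [Finset.mem_toRight]

lemma sgnIns_inl (W : Finset (ι ⊕ ι)) (i : ι) :
    sgnIns (Sum.inl i) (W.erase (Sum.inl i)) = sgnIns i (W.toLeft.erase i) + W.toRight.card := by
  unfold sgnIns
  rw [card_filter_sumFinset, toLeft_erase_inl, toRight_erase_inl]
  congr 1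
  · congr 1; ext a; exact by simp [inl_lt_inl']
  · rw [Finset.filter_true_of_mem fun a _ => inl_lt_inr' i a]

lemma sgnIns_inr (W : Finset (ι ⊕ ι)) (i : ι) :
    sgnIns (Sum.inr i) (W.erase (Sum.inr i)) = sgnIns i (W.toRight.erase i) := by
  unfold sgnIns
  rw [card_filter_sumFinset, toLeft_erase_inr, toRight_erase_inr]
  rw [Finset.filter_false_of_mem fun a _ => not_inr_lt_inl', Finset.card_empty]
  rw [zero_add]
  congr 1; ext a; exact by simp [inr_lt_inr']

lemma sum_sumFinset {M : Type} [AddCommMonoid M] (S : Finset (ι ⊕ ι)) (f : ι ⊕ ι → M) :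
    ∑ j ∈ S, f j = ∑ a ∈ S.toLeft, f (Sum.inl a) + ∑ a ∈ S.toRight, f (Sum.inr a) := by
  have hS : S = S.toLeft.map ⟨Sum.inl, Sum.inl_injective⟩ ∪ S.toRight.map ⟨Sum.inr, Sum.inr_injective⟩ := by
    ext j
    cases j <;> simp [Finset.mem_toLeft, Finset.mem_toRight]
  have hdisj : Disjoint (S.toLeft.map ⟨Sum.inl, Sum.inl_injective⟩)
      (S.toRight.map ⟨Sum.inr, Sum.inr_injective⟩) := by
    rw [Finset.disjoint_left]
    intro j h1 h2
    rw [Finset.mem_map] at h1 h2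
    obtain ⟨a, -, rfl⟩ := h1
    obtain ⟨b, -, hb⟩ := h2
    exact Sum.inl_ne_inr hb.symm
  conv_lhs => rw [hS]
  rw [Finset.sum_union hdisj, Finset.sum_map, Finset.sum_map]
  rfl




section CastLemmas

variable (X : Cube R ι)

lemma cast_cast' {S S' S'' : Finset ι} {a b c : ℤ} (h1 : S = S') (h1' : S' = S'')
    (h2 : a = b) (h2' : b = c) (v : X.ob S a) :
    X.cast h1' h2' (X.cast h1 h2 v) = X.cast (h1.trans h1') (h2.trans h2') v := by
  subst h1; subst h1'; subst h2; subst h2'; rfl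

lemma d_cast' {S S' : Finset ι} (h1 : S = S') {a b : ℤ} (h2 : a = b) (v : X.ob S a) :
    X.d S' b (X.cast h1 h2 v) = X.cast h1 (by rw [h2]) (X.d S a v) := by
  subst h1; subst h2; rfl

lemma map_cast' {S₀ S T : Finset ι} (h1 : S₀ = S) {a m : ℤ} (h2 : a = m) (hST : S ⊆ T)
    (v : X.ob S₀ a) :
    X.map S T hST m (X.cast h1 h2 v) = X.cast rfl h2 (X.map S₀ T (h1 ▸ hST) a v) := by
  subst h1; subst h2; rfl

lemma term_eq (k : ℤ) (x : tOb X k) {S S' T : Finset ι} (hS : S = S') (hST : S ⊆ T)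
    (hST' : S' ⊆ T) {m : ℤ} (p : k + (S.card : ℤ) = m) (p' : k + (S'.card : ℤ) = m)
    {c c' : R} (hc : c = c') :
    c • X.cast rfl p (X.map S T hST _ (x S)) = c' • X.cast rfl p' (X.map S' T hST' _ (x S')) := by
  subst hS; subst hc; rfl

end CastLemmas

section DblLemmas

variable (X : Cube R ι)

lemma dbl_cast {W : Finset (ι ⊕ ι)} {a b : ℤ} (h : a = b) (v : X.dbl.ob W a) :
    X.dbl.cast rfl h v = X.cast (S := W.toLeft ∪ W.toRight) rfl h v := by
  subst h; rfl

lemma dbl_d (W : Finset (ι ⊕ ι)) (m : ℤ) (v : X.dbl.ob W m) :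
    X.dbl.d W m v = X.d (W.toLeft ∪ W.toRight) m v := rfl

lemma dbl_map (W W' : Finset (ι ⊕ ι)) (h : W ⊆ W') (m : ℤ) (v : X.dbl.ob W m) :
    X.dbl.map W W' h m v
      = X.map (W.toLeft ∪ W.toRight) (W'.toLeft ∪ W'.toRight)
          (Finset.union_subset_union (Finset.toLeft_subset_toLeft h)
            (Finset.toRight_subset_toRight h)) m v := rfl

end DblLemmas

lemma neg_one_pow_congr₂ {m n : ℕ} (h : m % 2 = n % 2) : ((-1 : R)) ^ m = (-1) ^ n := by
  rw [neg_one_pow_eq_pow_mod_two, h, ← neg_one_pow_eq_pow_mod_two]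

/-- The `i`-th term of the sum part of `tD` evaluated on `x`, as a total function of `i`. -/
noncomputable def tDsum (X : Cube R ι) (k : ℤ) (x : tOb X k) (S : Finset ι) (i : ι) :
    X.ob S (k - 1 + S.card) :=
  if hi : i ∈ S then
    ((-1 : R) ^ (sgnIns i (S.erase i) + 1)) •
      ((X.cast rfl (show k + ((S.erase i).card : ℤ) = k - 1 + S.card by
          have h1 := Finset.card_erase_of_mem hi
          have h2 : 0 < S.card := Finset.card_pos.mpr ⟨i, hi⟩
          omega))
        ((X.map (S.erase i) S (Finset.erase_subset _ _) (k + ((S.erase i).card : ℤ)))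
          (x (S.erase i))))
  else 0

lemma tD_eval (X : Cube R ι) (k : ℤ) (x : tOb X k) (S : Finset ι) :
    tD X k x S
      = ((-1 : R) ^ S.card) •
          (X.cast rfl (show k + (S.card : ℤ) - 1 = k - 1 + S.card by ring)
            (X.d S (k + S.card) (x S)))
        + ∑ i ∈ S, tDsum X k x S i := by
  simp only [tD, LinearMap.pi_apply, LinearMap.add_apply, LinearMap.smul_apply,
    LinearMap.coe_comp, Function.comp_apply, LinearMap.proj_apply, LinearMap.coe_sum,
    Finset.sum_apply]
  congr 1
  rw [← Finset.sum_attach S (tDsum X k x S)]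
  refine Finset.sum_congr rfl fun i _ => ?_
  rw [tDsum, dif_pos i.2]

lemma xiMap_eval (X : Cube R ι) (k : ℤ) (x : tOb X k) (W' : Finset (ι ⊕ ι))
    (A B : Finset ι) (hA : W'.toLeft = A) (hB : W'.toRight = B) :
    xiMap X k x W'
      = if h : Disjoint A B then
          ((-1 : R) ^ sgn2 A B) •
            (X.cast (show A ∪ B = W'.toLeft ∪ W'.toRight by subst hA; subst hB; rfl)
              (show k + ((A ∪ B).card : ℤ) = k + W'.card by
                rw [Finset.card_union_of_disjoint h, ← hA, ← hB,
                  ← Finset.card_toLeft_add_card_toRight (u := W')])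
              (x (A ∪ B)))
        else 0 := by
  subst hA; subst hB
  simp only [xiMap, LinearMap.pi_apply]
  by_cases h : Disjoint W'.toLeft W'.toRight
  · rw [dif_pos h, dif_pos h]
    rfl
  · rw [dif_neg h, dif_neg h]
    rfl

lemma tDsum_dbl_inl (X : Cube R ι) (k : ℤ) (x : tOb X k) (W : Finset (ι ⊕ ι)) (a : ι)
    (ha : Sum.inl a ∈ W) :
    tDsum X.dbl k (xiMap X k x) W (Sum.inl a)
      = if h : Disjoint (W.toLeft.erase a) W.toRight then
          ((-1 : R) ^ ((sgnIns a (W.toLeft.erase a) + W.toRight.card + 1)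
              + sgn2 (W.toLeft.erase a) W.toRight)) •
            (X.cast rfl
              (show k + (((W.toLeft.erase a ∪ W.toRight) : Finset ι).card : ℤ)
                  = k - 1 + W.card by
                have h1 : a ∈ W.toLeft := Finset.mem_toLeft.2 ha
                have h2 := Finset.card_erase_of_mem h1
                have h3 := Finset.card_toLeft_add_card_toRight (u := W)
                have h4 : 0 < W.toLeft.card := Finset.card_pos.mpr ⟨a, h1⟩
                rw [Finset.card_union_of_disjoint h]
                omega)
              (X.map (W.toLeft.erase a ∪ W.toRight) (W.toLeft ∪ W.toRight)
                (Finset.union_subset_union (Finset.erase_subset _ _) (le_refl _))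
                (k + (((W.toLeft.erase a ∪ W.toRight) : Finset ι).card : ℤ))
                (x (W.toLeft.erase a ∪ W.toRight))))
        else 0 := by
  rw [tDsum, dif_pos ha]
  rw [xiMap_eval X k x (W.erase (Sum.inl a)) (W.toLeft.erase a) W.toRight
    (toLeft_erase_inl W a) (toRight_erase_inl W a)]
  by_cases h : Disjoint (W.toLeft.erase a) W.toRight
  · rw [dif_pos h, dif_pos h]
    erw [map_smul]
    simp only [map_smul, smul_smul]
    erw [dbl_cast, dbl_map, map_cast', cast_cast']
    rw [← pow_add, sgnIns_inl]
    rfl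
  · rw [dif_neg h, dif_neg h]
    erw [map_zero, map_zero, smul_zero]
    rfl

lemma tDsum_dbl_inr (X : Cube R ι) (k : ℤ) (x : tOb X k) (W : Finset (ι ⊕ ι)) (a : ι)
    (ha : Sum.inr a ∈ W) :
    tDsum X.dbl k (xiMap X k x) W (Sum.inr a)
      = if h : Disjoint W.toLeft (W.toRight.erase a) then
          ((-1 : R) ^ ((sgnIns a (W.toRight.erase a) + 1)
              + sgn2 W.toLeft (W.toRight.erase a))) •
            (X.cast rfl
              (show k + (((W.toLeft ∪ W.toRight.erase a) : Finset ι).card : ℤ)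
                  = k - 1 + W.card by
                have h1 : a ∈ W.toRight := Finset.mem_toRight.2 ha
                have h2 := Finset.card_erase_of_mem h1
                have h3 := Finset.card_toLeft_add_card_toRight (u := W)
                have h4 : 0 < W.toRight.card := Finset.card_pos.mpr ⟨a, h1⟩
                rw [Finset.card_union_of_disjoint h]
                omega)
              (X.map (W.toLeft ∪ W.toRight.erase a) (W.toLeft ∪ W.toRight)
                (Finset.union_subset_union (le_refl _) (Finset.erase_subset _ _))
                (k + (((W.toLeft ∪ W.toRight.erase a) : Finset ι).card : ℤ))
                (x (W.toLeft ∪ W.toRight.erase a))))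
        else 0 := by
  rw [tDsum, dif_pos ha]
  rw [xiMap_eval X k x (W.erase (Sum.inr a)) W.toLeft (W.toRight.erase a)
    (toLeft_erase_inr W a) (toRight_erase_inr W a)]
  by_cases h : Disjoint W.toLeft (W.toRight.erase a)
  · rw [dif_pos h, dif_pos h]
    erw [map_smul]
    simp only [map_smul, smul_smul]
    erw [dbl_cast, dbl_map, map_cast', cast_cast']
    rw [← pow_add, sgnIns_inr]
    rfl
  · rw [dif_neg h, dif_neg h]
    erw [map_zero, map_zero, smul_zero]
    rfl

theorem chainmap_general (X : Cube R ι) :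
    IsChainMap (M := fun k => tOb X k) (N := fun k => tOb X.dbl k)
      (tD X) (tD X.dbl) (xiMap X) := by
  intro k
  apply LinearMap.ext
  intro x
  simp only [LinearMap.comp_apply]
  funext W
  rw [xiMap_eval X (k - 1) (tD X k x) W W.toLeft W.toRight rfl rfl]
  rw [tD_eval X.dbl k (xiMap X k x) W]
  rw [xiMap_eval X k x W W.toLeft W.toRight rfl rfl]
  rw [sum_sumFinset W (tDsum X.dbl k (xiMap X k x) W)]
  by_cases hd : Disjoint W.toLeft W.toRight
  · rw [dif_pos hd, dif_pos hd]
    rw [tD_eval X k x (W.toLeft ∪ W.toRight)]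
    rw [map_add, smul_add]
    have hTW : ((W.toLeft ∪ W.toRight) : Finset ι).card = W.card := by
      rw [Finset.card_union_of_disjoint hd, Finset.card_toLeft_add_card_toRight]
    congr 1
    · -- d-terms
      erw [map_smul (X.dbl.d W _)]
      simp only [map_smul, smul_smul]
      erw [dbl_cast, dbl_d, d_cast', cast_cast', cast_cast']
      rw [← pow_add, ← pow_add]
      congr 1
      apply neg_one_pow_congr₂
      omega
      rfl
    · -- sum terms
      rw [map_sum, Finset.smul_sum, Finset.sum_union hd]
      congr 1
      · refine Finset.sum_congr rfl fun a haP => ?_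
        have haW : Sum.inl a ∈ W := Finset.mem_toLeft.1 haP
        have haQ : a ∉ W.toRight := Finset.disjoint_left.1 hd haP
        rw [tDsum_dbl_inl X k x W a haW,
          dif_pos (hd.mono (Finset.erase_subset a W.toLeft) le_rfl)]
        rw [tDsum, dif_pos (Finset.mem_union_left _ haP)]
        rw [map_smul, smul_smul, cast_cast', ← pow_add]
        refine term_eq X k x (erase_union_left haQ) _ _ _ _ ?_
        apply neg_one_pow_congr₂
        have e1 := sgn2_erase_left W.toRight haP
        have e2 := sgnIns_union_left hd haP
        have e3 := card_filter_lt_add a W.toRight haQ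
        omega
      · refine Finset.sum_congr rfl fun a haQ => ?_
        have haW : Sum.inr a ∈ W := Finset.mem_toRight.1 haQ
        have haP : a ∉ W.toLeft := Finset.disjoint_right.1 hd haQ
        rw [tDsum_dbl_inr X k x W a haW,
          dif_pos (hd.mono le_rfl (Finset.erase_subset a W.toRight))]
        rw [tDsum, dif_pos (Finset.mem_union_right _ haQ)]
        rw [map_smul, smul_smul, cast_cast', ← pow_add]
        refine term_eq X k x (erase_union_right haP) _ _ _ _ ?_
        apply neg_one_pow_congr₂
        have e1 := sgn2_erase_right W.toLeft haQ
        have e2 := sgnIns_union_right hd haQ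
        omega
  · rw [dif_neg hd, dif_neg hd]
    erw [map_zero, map_zero, smul_zero, zero_add]
    obtain ⟨c, hcP, hcQ⟩ := Finset.not_disjoint_iff.1 hd
    by_cases hone : W.toLeft ∩ W.toRight ⊆ {c}
    · have hPQ : ∀ b, b ∈ W.toLeft → b ∈ W.toRight → b = c := fun b h1 h2 =>
        Finset.mem_singleton.1 (hone (Finset.mem_inter.2 ⟨h1, h2⟩))
      have hdl : Disjoint (W.toLeft.erase c) W.toRight := by
        rw [Finset.disjoint_left]
        intro b hb hbQ
        exact (Finset.mem_erase.1 hb).1 (hPQ b (Finset.mem_erase.1 hb).2 hbQ)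
      have hdr : Disjoint W.toLeft (W.toRight.erase c) := by
        rw [Finset.disjoint_right]
        intro b hb hbP
        exact (Finset.mem_erase.1 hb).1 (hPQ b hbP (Finset.mem_erase.1 hb).2)
      have hLsum : ∑ a ∈ W.toLeft, tDsum X.dbl k (xiMap X k x) W (Sum.inl a)
          = tDsum X.dbl k (xiMap X k x) W (Sum.inl c) := by
        refine Finset.sum_eq_single_of_mem c hcP fun b hb hbc => ?_
        rw [tDsum_dbl_inl X k x W b (Finset.mem_toLeft.1 hb), dif_neg]; rfl
        exact Finset.not_disjoint_iff.2
          ⟨c, Finset.mem_erase.2 ⟨fun h => hbc (by rw [← h]), hcP⟩, hcQ⟩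
      have hRsum : ∑ a ∈ W.toRight, tDsum X.dbl k (xiMap X k x) W (Sum.inr a)
          = tDsum X.dbl k (xiMap X k x) W (Sum.inr c) := by
        refine Finset.sum_eq_single_of_mem c hcQ fun b hb hbc => ?_
        rw [tDsum_dbl_inr X k x W b (Finset.mem_toRight.1 hb), dif_neg]; rfl
        exact Finset.not_disjoint_iff.2
          ⟨c, hcP, Finset.mem_erase.2 ⟨fun h => hbc (by rw [← h]), hcQ⟩⟩
      rw [hLsum, hRsum]
      rw [tDsum_dbl_inl X k x W c (Finset.mem_toLeft.1 hcP), dif_pos hdl]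
      rw [tDsum_dbl_inr X k x W c (Finset.mem_toRight.1 hcQ), dif_pos hdr]
      have hset : (W.toLeft ∪ W.toRight.erase c : Finset ι) = W.toLeft.erase c ∪ W.toRight := by
        ext s
        by_cases hsc : s = c
        · subst hsc
          simp [Finset.mem_union, Finset.mem_erase, hcP, hcQ]
        · simp [Finset.mem_union, Finset.mem_erase, hsc]
      have key : ((-1 : R) ^ ((sgnIns c (W.toRight.erase c) + 1)
              + sgn2 W.toLeft (W.toRight.erase c))) •
            (X.cast rfl
              (show k + (((W.toLeft ∪ W.toRight.erase c) : Finset ι).card : ℤ)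
                  = k - 1 + W.card by
                have h1 : c ∈ W.toRight := hcQ
                have h2 := Finset.card_erase_of_mem h1
                have h3 := Finset.card_toLeft_add_card_toRight (u := W)
                have h4 : 0 < W.toRight.card := Finset.card_pos.mpr ⟨c, h1⟩
                rw [Finset.card_union_of_disjoint hdr]
                omega)
              (X.map (W.toLeft ∪ W.toRight.erase c) (W.toLeft ∪ W.toRight)
                (Finset.union_subset_union (le_refl _) (Finset.erase_subset _ _))
                (k + (((W.toLeft ∪ W.toRight.erase c) : Finset ι).card : ℤ))
                (x (W.toLeft ∪ W.toRight.erase c))))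
          = ((-1) * (-1 : R) ^ ((sgnIns c (W.toLeft.erase c) + W.toRight.card + 1)
              + sgn2 (W.toLeft.erase c) W.toRight)) •
            (X.cast rfl
              (show k + (((W.toLeft.erase c ∪ W.toRight) : Finset ι).card : ℤ)
                  = k - 1 + W.card by
                have h1 : c ∈ W.toLeft := hcP
                have h2 := Finset.card_erase_of_mem h1
                have h3 := Finset.card_toLeft_add_card_toRight (u := W)
                have h4 : 0 < W.toLeft.card := Finset.card_pos.mpr ⟨c, h1⟩
                rw [Finset.card_union_of_disjoint hdl]
                omega)
              (X.map (W.toLeft.erase c ∪ W.toRight) (W.toLeft ∪ W.toRight)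
                (Finset.union_subset_union (Finset.erase_subset _ _) (le_refl _))
                (k + (((W.toLeft.erase c ∪ W.toRight) : Finset ι).card : ℤ))
                (x (W.toLeft.erase c ∪ W.toRight)))) := by
        refine term_eq X k x hset _ _ _ _ ?_
        rw [show ((-1 : R) * (-1) ^ ((sgnIns c (W.toLeft.erase c) + W.toRight.card + 1)
            + sgn2 (W.toLeft.erase c) W.toRight))
            = (-1 : R) ^ (((sgnIns c (W.toLeft.erase c) + W.toRight.card + 1)
            + sgn2 (W.toLeft.erase c) W.toRight) + 1) by rw [pow_succ]; ring]
        apply neg_one_pow_congr₂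
        have e1 := sgn2_erase_left W.toRight hcP
        have e2 := sgn2_erase_right W.toLeft hcQ
        have e3 := card_filter_lt_add' c W.toRight hcQ
        have e4 := sgnIns_erase c W.toLeft
        have e5 := sgnIns_erase c W.toRight
        omega
      erw [key, mul_smul, neg_one_smul, add_neg_cancel]; rfl
    · obtain ⟨e, heI, hec⟩ := Finset.not_subset.1 hone
      have heP : e ∈ W.toLeft := (Finset.mem_inter.1 heI).1
      have heQ : e ∈ W.toRight := (Finset.mem_inter.1 heI).2
      have hec' : e ≠ c := fun h => hec (Finset.mem_singleton.2 h)
      have hLzero : ∑ a ∈ W.toLeft, tDsum X.dbl k (xiMap X k x) W (Sum.inl a) = 0 := by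
        refine Finset.sum_eq_zero fun a ha => ?_
        rw [tDsum_dbl_inl X k x W a (Finset.mem_toLeft.1 ha), dif_neg]; rfl
        by_cases hac : a = c
        · exact Finset.not_disjoint_iff.2
            ⟨e, Finset.mem_erase.2 ⟨fun h => hec' (h.trans hac), heP⟩, heQ⟩
        · exact Finset.not_disjoint_iff.2
            ⟨c, Finset.mem_erase.2 ⟨fun h => hac h.symm, hcP⟩, hcQ⟩
      have hRzero : ∑ a ∈ W.toRight, tDsum X.dbl k (xiMap X k x) W (Sum.inr a) = 0 := by
        refine Finset.sum_eq_zero fun a ha => ?_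
        rw [tDsum_dbl_inr X k x W a (Finset.mem_toRight.1 ha), dif_neg]; rfl
        by_cases hac : a = c
        · exact Finset.not_disjoint_iff.2
            ⟨e, heP, Finset.mem_erase.2 ⟨fun h => hec' (h.trans hac), heQ⟩⟩
        · exact Finset.not_disjoint_iff.2
            ⟨c, hcP, Finset.mem_erase.2 ⟨fun h => hac h.symm, hcQ⟩⟩
      erw [hLzero, hRzero, add_zero]; rfl

end Aux

/-- for any `n`-cube `X` of chain complexes of `R`-modules, the map
`ξ : tX → t²X` is a chain map. -/
theorem stmt_9 (n : ℕ) (X : Cube R (Fin n)) (h1 : X.IsComplex) (h2 : X.MapsAreChain)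
    (h3 : X.IsFunctorial) :
    IsChainMap (M := fun k => tOb X k) (N := fun k => tOb X.dbl k)
      (tD X) (tD X.dbl) (xiMap X) :=
  chainmap_general X
end T
end
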